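/- Let k be a field of characteristic 0. The space of all polynomials g ∈ k[x,y] satisfying g(x−z, y−z) + g(x,z) − g(y,z) − g(x,y) = 0 in k[x,y,z] is exactly the linear span of the polynomials x^n − y^n − (x−y)^n for n ≥ 0 (where n = 0 gives the constant −1, equivalently constants are solutions). -/

import Mathlib

open MvPolynomial Finsupp

set_option linter.unusedSectionVars false
namespace Stmt1Aux

variable {k : Type*} [Field k] [CharZero k]

lemma pderiv_aeval_fin {n m : ℕ} (f : Fin n → MvPolynomial (Fin m) k)
    (i : Fin m) (p : MvPolynomial (Fin n) k) :
    pderiv i (aeval f p) = ∑ j, aeval f (pderiv j p) * pderiv i (f j) := by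
  induction p using MvPolynomial.induction_on with
  | C a => simp
  | add p q hp hq =>
      simp only [map_add, hp, hq, add_mul]
      rw [Finset.sum_add_distrib]
  | mul_X p j hp =>
      simp only [map_mul, aeval_X, pderiv_mul, hp, map_add, add_mul]
      rw [Finset.sum_add_distrib]
      congr 1
      · rw [Finset.sum_mul]
        exact Finset.sum_congr rfl fun j' _ => by ring
      · rw [Finset.sum_eq_single j]
        · simp
        · intro j' _ hne
          simp [pderiv_X_of_ne (Ne.symm hne)]
        · simp

lemma pderiv_aeval_two {m : ℕ} (a b : MvPolynomial (Fin m) k)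
    (i : Fin m) (p : MvPolynomial (Fin 2) k) :
    pderiv i (aeval ![a, b] p) =
      aeval ![a, b] (pderiv 0 p) * pderiv i a + aeval ![a, b] (pderiv 1 p) * pderiv i b := by
  rw [pderiv_aeval_fin, Fin.sum_univ_two]
  rfl

lemma aeval_aeval_two {m l : ℕ} (a b : MvPolynomial (Fin m) k)
    (h : Fin m → MvPolynomial (Fin l) k) (p : MvPolynomial (Fin 2) k) :
    aeval h (aeval ![a, b] p) = aeval ![aeval h a, aeval h b] p := by
  rw [comp_aeval_apply]
  have e : (fun i => aeval h (![a, b] i)) = ![aeval h a, aeval h b] := by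
    funext i; fin_cases i <;> rfl
  rw [e]

lemma aeval_X01 (p : MvPolynomial (Fin 2) k) : aeval ![(X 0 : MvPolynomial (Fin 2) k), X 1] p = p := by
  have : ![(X 0 : MvPolynomial (Fin 2) k), X 1] = X := by
    funext i; fin_cases i <;> rfl
  rw [this, aeval_X_left_apply]

lemma coeff_eq_zero_of_pderiv {n : ℕ} (i : Fin n) (P : MvPolynomial (Fin n) k)
    (h : pderiv i P = 0) (m : Fin n →₀ ℕ) (hm : m i ≠ 0) : coeff m P = 0 := by
  have h0 : coeff (m - single i 1) (pderiv i P) = 0 := by rw [h]; simp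
  rw [show P = ∑ v ∈ P.support, monomial v (coeff v P) from (support_sum_monomial_coeff P).symm] at h0
  simp only [map_sum, pderiv_monomial, coeff_sum, coeff_monomial] at h0
  by_cases hmem : m ∈ P.support
  · rw [Finset.sum_eq_single m] at h0
    · rw [if_pos rfl] at h0
      have hkc : (m i : k) ≠ 0 := Nat.cast_ne_zero.mpr hm
      rcases mul_eq_zero.mp h0 with h' | h'
      · exact h'
      · exact absurd h' hkc
    · intro v hv hne
      rcases Nat.eq_zero_or_pos (v i) with hvi | hvi
      · simp [hvi]
      · rw [if_neg]
        intro heq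
        apply hne
        ext j
        by_cases hji : j = i
        · subst hji
          have h1 := DFunLike.congr_fun heq j
          simp only [Finsupp.tsub_apply, single_eq_same] at h1
          omega
        · have h1 := DFunLike.congr_fun heq j
          simpa [Finsupp.tsub_apply, single_eq_of_ne hji] using h1
    · intro h'; exact absurd hmem h'
  · simpa using hmem

lemma aeval_zero2_of_pderiv (P : MvPolynomial (Fin 3) k) (h : pderiv 2 P = 0) :
    aeval ![X 0, X 1, (0 : MvPolynomial (Fin 3) k)] P = P := by
  have key : ∀ v ∈ P.support,
      aeval ![X 0, X 1, (0 : MvPolynomial (Fin 3) k)] (monomial v (coeff v P))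
        = monomial v (coeff v P) := by
    intro v hv
    have hv2 : v 2 = 0 := by
      by_contra h2
      exact (MvPolynomial.mem_support_iff.mp hv) (coeff_eq_zero_of_pderiv 2 P h v h2)
    rw [aeval_monomial, monomial_eq]
    congr 1
    refine Finsupp.prod_congr fun j hj => ?_
    fin_cases j
    · rfl
    · rfl
    · exact absurd hv2 (Finsupp.mem_support_iff.mp hj)
  calc aeval ![X 0, X 1, (0 : MvPolynomial (Fin 3) k)] P
      = ∑ v ∈ P.support, aeval ![X 0, X 1, (0 : MvPolynomial (Fin 3) k)] (monomial v (coeff v P)) := by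
        conv_lhs => rw [← support_sum_monomial_coeff P]
        rw [map_sum]
    _ = ∑ v ∈ P.support, monomial v (coeff v P) := Finset.sum_congr rfl key
    _ = P := support_sum_monomial_coeff P

/-- The defining linear condition. -/
noncomputable def Tmap (g : MvPolynomial (Fin 2) k) : MvPolynomial (Fin 3) k :=
  aeval ![(X 0 : MvPolynomial (Fin 3) k) - X 2, X 1 - X 2] g
    + aeval ![(X 0 : MvPolynomial (Fin 3) k), X 2] g
    - aeval ![(X 1 : MvPolynomial (Fin 3) k), X 2] g
    - aeval ![(X 0 : MvPolynomial (Fin 3) k), X 1] g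

/-- The generators. -/
noncomputable def pp (n : ℕ) : MvPolynomial (Fin 2) k :=
  (X 0 : MvPolynomial (Fin 2) k) ^ n - X 1 ^ n - (X 0 - X 1) ^ n

lemma Tmap_pp (n : ℕ) : Tmap (pp n : MvPolynomial (Fin 2) k) = 0 := by
  simp only [Tmap, pp, map_sub, map_pow, aeval_X, Matrix.cons_val_zero, Matrix.cons_val_one,
    Matrix.head_cons]
  ring

lemma Tmap_add (g h : MvPolynomial (Fin 2) k) : Tmap (g + h) = Tmap g + Tmap h := by
  simp only [Tmap, map_add]; ring

lemma Tmap_smul (c : k) (g : MvPolynomial (Fin 2) k) : Tmap (c • g) = c • Tmap g := by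
  simp only [Tmap, map_smul, smul_sub, smul_add]

lemma Tmap_sub (g h : MvPolynomial (Fin 2) k) : Tmap (g - h) = Tmap g - Tmap h := by
  simp only [Tmap, map_sub]; ring

lemma eval_z0 (q : MvPolynomial (Fin 2) k) (hq : Tmap q = 0) :
    aeval ![(X 0 : MvPolynomial (Fin 2) k), 0] q = aeval ![(X 1 : MvPolynomial (Fin 2) k), 0] q := by
  have h := congrArg (aeval ![(X 0 : MvPolynomial (Fin 2) k), X 1, 0]) hq
  simp only [Tmap, map_add, map_sub, aeval_aeval_two, aeval_X, map_zero,
    Matrix.cons_val_zero, Matrix.cons_val_one, Matrix.head_cons, Matrix.cons_val_two,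
    Matrix.tail_cons, sub_zero, aeval_X01] at h
  linear_combination h

lemma deriv_ident (g : MvPolynomial (Fin 2) k) (hg : Tmap g = 0) :
    pderiv 0 g + pderiv 1 g
      = aeval ![(X 0 : MvPolynomial (Fin 2) k), 0] (pderiv 1 g)
        - aeval ![(X 1 : MvPolynomial (Fin 2) k), 0] (pderiv 1 g) := by
  have h2 : pderiv (2 : Fin 3) (Tmap g) = 0 := by rw [hg]; simp
  simp only [Tmap, map_add, map_sub, pderiv_aeval_two, pderiv_X_self,
    pderiv_X_of_ne (show (0 : Fin 3) ≠ 2 by decide),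
    pderiv_X_of_ne (show (1 : Fin 3) ≠ 2 by decide),
    map_zero, zero_sub, sub_zero, mul_neg, mul_one, mul_zero, add_zero, zero_add] at h2
  have h3 := congrArg (aeval ![(X 0 : MvPolynomial (Fin 2) k), X 1, 0]) h2
  simp only [map_add, map_sub, map_neg, map_zero, aeval_aeval_two, aeval_X,
    Matrix.cons_val_zero, Matrix.cons_val_one, Matrix.head_cons, Matrix.cons_val_two,
    Matrix.tail_cons, sub_zero, aeval_X01] at h3
  linear_combination -h3

lemma eq_of_D_zero (q : MvPolynomial (Fin 2) k) (hD : pderiv 0 q + pderiv 1 q = 0) :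
    q = aeval ![(X 0 : MvPolynomial (Fin 2) k) - X 1, 0] q := by
  have hP : pderiv (2 : Fin 3)
      (aeval ![(X 0 : MvPolynomial (Fin 3) k) + X 2, X 1 + X 2] q
        - aeval ![(X 0 : MvPolynomial (Fin 3) k), X 1] q) = 0 := by
    simp only [map_sub, pderiv_aeval_two, map_add, pderiv_X_self,
      pderiv_X_of_ne (show (0 : Fin 3) ≠ 2 by decide),
      pderiv_X_of_ne (show (1 : Fin 3) ≠ 2 by decide),
      zero_add, mul_one, mul_zero, add_zero, sub_zero, zero_sub]
    rw [← map_add, hD]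
    simp
  have hW := aeval_zero2_of_pderiv _ hP
  simp only [map_sub, aeval_aeval_two, aeval_X, map_add, map_zero,
    Matrix.cons_val_zero, Matrix.cons_val_one, Matrix.head_cons, Matrix.cons_val_two,
    Matrix.tail_cons, add_zero] at hW
  have hE : aeval ![(X 0 : MvPolynomial (Fin 3) k) + X 2, X 1 + X 2] q
      = aeval ![(X 0 : MvPolynomial (Fin 3) k), X 1] q := by
    linear_combination -hW
  have h := congrArg (aeval ![(X 0 : MvPolynomial (Fin 2) k) - X 1, 0, X 1]) hE
  simp only [aeval_aeval_two, aeval_X, map_add, map_zero,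
    Matrix.cons_val_zero, Matrix.cons_val_one, Matrix.head_cons, Matrix.cons_val_two,
    Matrix.tail_cons, zero_add, sub_add_cancel, aeval_X01] at h
  exact h

lemma eq_C_of (q : MvPolynomial (Fin 2) k) (hq : Tmap q = 0)
    (hD : pderiv 0 q + pderiv 1 q = 0) : q = C (constantCoeff q) := by
  have h1 := eq_of_D_zero q hD
  have h2 := congrArg (aeval ![(X 0 : MvPolynomial (Fin 2) k) - X 1, 0]) (eval_z0 q hq)
  simp only [aeval_aeval_two, aeval_X, map_zero,
    Matrix.cons_val_zero, Matrix.cons_val_one, Matrix.head_cons] at h2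
  have h3 : ![(0 : MvPolynomial (Fin 2) k), 0] = (fun _ => 0) := by
    funext i; fin_cases i <;> rfl
  rw [h3, aeval_zero'] at h2
  conv_lhs => rw [h1, h2]
  rw [algebraMap_eq]

lemma D_pp (a : ℕ) :
    pderiv 0 (pp (a+1) : MvPolynomial (Fin 2) k) + pderiv 1 (pp (a+1))
      = C ((a : k) + 1) * ((X 0 : MvPolynomial (Fin 2) k) ^ a - X 1 ^ a) := by
  have hc : ((a + 1 : ℕ) : MvPolynomial (Fin 2) k) = C ((a : k) + 1) := by
    rw [← map_natCast (C : k →+* MvPolynomial (Fin 2) k)]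
    push_cast
    ring
  simp only [pp, map_sub, pderiv_pow, pderiv_X_self,
    pderiv_X_of_ne (show (1 : Fin 2) ≠ 0 by decide),
    pderiv_X_of_ne (show (0 : Fin 2) ≠ 1 by decide),
    Nat.add_sub_cancel, hc]
  ring

lemma paeval_expand (x : MvPolynomial (Fin 2) k) (w : Polynomial k) :
    Polynomial.aeval x w = ∑ a ∈ w.support, C (w.coeff a) * x ^ a := by
  rw [Polynomial.aeval_def, Polynomial.eval₂_eq_sum, Polynomial.sum_def]
  simp [algebraMap_eq]

lemma link (x : MvPolynomial (Fin 2) k) (h : MvPolynomial (Fin 2) k) :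
    Polynomial.aeval x (aeval ![Polynomial.X, (0 : Polynomial k)] h)
      = aeval ![x, (0 : MvPolynomial (Fin 2) k)] h := by
  rw [← AlgHom.comp_apply]
  have e : (Polynomial.aeval x).comp (aeval ![Polynomial.X, (0 : Polynomial k)])
      = aeval ![x, (0 : MvPolynomial (Fin 2) k)] := by
    apply MvPolynomial.algHom_ext
    intro i
    fin_cases i <;> simp
  rw [e]

noncomputable def TL : MvPolynomial (Fin 2) k →ₗ[k] MvPolynomial (Fin 3) k :=
  (aeval ![(X 0 : MvPolynomial (Fin 3) k) - X 2, X 1 - X 2]).toLinearMap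
    + (aeval ![(X 0 : MvPolynomial (Fin 3) k), X 2]).toLinearMap
    - (aeval ![(X 1 : MvPolynomial (Fin 3) k), X 2]).toLinearMap
    - (aeval ![(X 0 : MvPolynomial (Fin 3) k), X 1]).toLinearMap

lemma TL_apply (g : MvPolynomial (Fin 2) k) : TL g = Tmap g := rfl

lemma mem_span (g : MvPolynomial (Fin 2) k) (hg : Tmap g = 0) :
    g ∈ Submodule.span k
      {p : MvPolynomial (Fin 2) k |
        ∃ n : ℕ, p = (X 0 : MvPolynomial (Fin 2) k) ^ n - X 1 ^ n - (X 0 - X 1) ^ n} := by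
  classical
  set S := {p : MvPolynomial (Fin 2) k |
    ∃ n : ℕ, p = (X 0 : MvPolynomial (Fin 2) k) ^ n - X 1 ^ n - (X 0 - X 1) ^ n} with hS
  have hpp : ∀ n : ℕ, (pp n : MvPolynomial (Fin 2) k) ∈ S := fun n => ⟨n, rfl⟩
  set w : Polynomial k := aeval ![Polynomial.X, (0 : Polynomial k)] (pderiv 1 g) with hw
  set G : MvPolynomial (Fin 2) k
    := ∑ a ∈ w.support, C (w.coeff a / ((a : k) + 1)) * pp (a + 1) with hG
  have hGspan : G ∈ Submodule.span k S := by
    refine Submodule.sum_mem _ fun a _ => ?_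
    rw [← MvPolynomial.smul_eq_C_mul]
    exact Submodule.smul_mem _ _ (Submodule.subset_span (hpp _))
  have hTG : Tmap G = 0 := by
    rw [← TL_apply, hG, map_sum]
    refine Finset.sum_eq_zero fun a _ => ?_
    rw [← MvPolynomial.smul_eq_C_mul, map_smul, TL_apply, Tmap_pp, smul_zero]
  have hDG : pderiv 0 G + pderiv 1 G
      = Polynomial.aeval (X 0 : MvPolynomial (Fin 2) k) w
        - Polynomial.aeval (X 1 : MvPolynomial (Fin 2) k) w := by
    rw [hG, map_sum, map_sum, ← Finset.sum_add_distrib, paeval_expand, paeval_expand,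
      ← Finset.sum_sub_distrib]
    refine Finset.sum_congr rfl fun a _ => ?_
    rw [pderiv_C_mul, pderiv_C_mul, ← mul_add, D_pp, ← mul_assoc, ← map_mul,
      div_mul_cancel₀ _ (Nat.cast_add_one_ne_zero a), mul_sub]
  have hDg : pderiv 0 g + pderiv 1 g
      = Polynomial.aeval (X 0 : MvPolynomial (Fin 2) k) w
        - Polynomial.aeval (X 1 : MvPolynomial (Fin 2) k) w := by
    rw [deriv_ident g hg, hw, link, link]
  have hTq : Tmap (g - G) = 0 := by rw [Tmap_sub, hg, hTG, sub_zero]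
  have hDq : pderiv 0 (g - G) + pderiv 1 (g - G) = 0 := by
    simp only [map_sub]
    rw [sub_add_sub_comm, hDg, hDG, sub_self]
  have hqC := eq_C_of (g - G) hTq hDq
  have hCspan : (C (constantCoeff (g - G)) : MvPolynomial (Fin 2) k) ∈ Submodule.span k S := by
    have h0 := Submodule.smul_mem (Submodule.span k S) (-(constantCoeff (g - G)))
      (Submodule.subset_span (hpp 0))
    have : (-(constantCoeff (g - G))) • (pp 0 : MvPolynomial (Fin 2) k)
        = C (constantCoeff (g - G)) := by
      simp [pp, MvPolynomial.smul_eq_C_mul]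
    rwa [this] at h0
  have : g = (g - G) + G := by ring
  rw [this, hqC]
  exact Submodule.add_mem _ hCspan hGspan

end Stmt1Aux

open Stmt1Aux in
theorem stmt1 (k : Type*) [Field k] [CharZero k] :
    {g : MvPolynomial (Fin 2) k |
      aeval ![(X 0 : MvPolynomial (Fin 3) k) - X 2, X 1 - X 2] g
        + aeval ![(X 0 : MvPolynomial (Fin 3) k), X 2] g
        - aeval ![(X 1 : MvPolynomial (Fin 3) k), X 2] g
        - aeval ![(X 0 : MvPolynomial (Fin 3) k), X 1] g = 0}
    = ↑(Submodule.span k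
        {p : MvPolynomial (Fin 2) k |
          ∃ n : ℕ, p = (X 0 : MvPolynomial (Fin 2) k) ^ n - X 1 ^ n - (X 0 - X 1) ^ n}) := by
  ext g
  simp only [Set.mem_setOf_eq, SetLike.mem_coe]
  constructor
  · intro hg
    exact mem_span g hg
  · intro hg
    show Tmap g = 0
    induction hg using Submodule.span_induction with
    | mem p hp =>
        obtain ⟨n, rfl⟩ := hp
        exact Tmap_pp n
    | zero => simp [Tmap]
    | add x y hx hy ihx ihy => rw [Tmap_add, ihx, ihy, add_zero]
    | smul a x hx ihx => rw [Tmap_smul, ihx, smul_zero]
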